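/- Let n ≥ 2. Every finite composition of overshears of ℂⁿ and permutations of the coordinates of ℂⁿ can be joined to the identity map by a path in Aut(ℂⁿ): there is a continuous map γ : [0,1] → C(ℂⁿ, ℂⁿ) (compact-open topology) such that every γ(t) is a bijective holomorphic self-map of ℂⁿ with holomorphic inverse, γ(0) is the given composition, and γ(1) is the identity. -/

import Mathlib

open Complex Function



/-- An overshear of `ℂ^(m+1)`: the map fixing the first `m` coordinates and sending
the last coordinate `z_{m+1}` to `f(z₁,…,z_m) + h(z₁,…,z_m)·z_{m+1}`, where `f, h`
are entire on `ℂ^m` and `h` is nowhere zero. -/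
def IsOvershear {m : ℕ} (F : (Fin (m + 1) → ℂ) → (Fin (m + 1) → ℂ)) : Prop :=
  ∃ f h : (Fin m → ℂ) → ℂ,
    Differentiable ℂ f ∧ Differentiable ℂ h ∧ (∀ w, h w ≠ 0) ∧
    ∀ z : Fin (m + 1) → ℂ,
      F z = Fin.snoc (Fin.init z)
        (f (Fin.init z) + h (Fin.init z) * z (Fin.last m))

/-- A permutation of the coordinates of `ℂ^(m+1)`. -/
def IsCoordPermutation {m : ℕ} (F : (Fin (m + 1) → ℂ) → (Fin (m + 1) → ℂ)) : Prop :=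
  ∃ σ : Equiv.Perm (Fin (m + 1)), ∀ z : Fin (m + 1) → ℂ, F z = fun j => z (σ j)

namespace OSproof

variable {m : ℕ}

/-- The set of biholomorphic automorphisms of ℂⁿ as continuous maps. -/
def good (m : ℕ) : Set C((Fin (m + 1) → ℂ), (Fin (m + 1) → ℂ)) :=
  {F | Differentiable ℂ F ∧ ∃ G, Differentiable ℂ G ∧
    Function.LeftInverse G F ∧ Function.RightInverse G F}

lemma id_mem : (ContinuousMap.id _) ∈ good m :=
  ⟨by simpa using differentiable_id, id, differentiable_id, fun z => rfl, fun z => rfl⟩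

lemma comp_mem {F G : C((Fin (m + 1) → ℂ), (Fin (m + 1) → ℂ))}
    (hF : F ∈ good m) (hG : G ∈ good m) : F.comp G ∈ good m := by
  obtain ⟨hFd, F', hF'd, hFl, hFr⟩ := hF
  obtain ⟨hGd, G', hG'd, hGl, hGr⟩ := hG
  refine ⟨hFd.comp hGd, G' ∘ F', hG'd.comp hF'd, fun z => ?_, fun z => ?_⟩
  · simp [hFl (G z), hGl z]
  · simp [hGr (F' z), hFr z]

lemma joined_comp {F G : C((Fin (m + 1) → ℂ), (Fin (m + 1) → ℂ))}
    (hF : JoinedIn (good m) F (ContinuousMap.id _))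
    (hG : JoinedIn (good m) G (ContinuousMap.id _)) :
    JoinedIn (good m) (F.comp G) (ContinuousMap.id _) := by
  obtain ⟨p, hp⟩ := hF
  obtain ⟨q, hq⟩ := hG
  refine ⟨⟨⟨fun t => (p t).comp (q t), ?_⟩, ?_, ?_⟩, fun t => comp_mem (hp t) (hq t)⟩
  · exact p.continuous.compCM q.continuous
  · simp
  · simp

lemma cont_snoc {X : Type*} [TopologicalSpace X] {w : X → Fin m → ℂ} {g : X → ℂ}
    (hw : Continuous w) (hg : Continuous g) :
    Continuous fun x => (Fin.snoc (w x) (g x) : Fin (m + 1) → ℂ) := by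
  apply continuous_pi; intro j
  refine Fin.lastCases ?_ ?_ j
  · simpa using hg
  · intro i; simp; exact (continuous_apply i).comp hw

lemma diff_init : Differentiable ℂ (Fin.init : (Fin (m + 1) → ℂ) → (Fin m → ℂ)) :=
  differentiable_pi.2 fun _ => differentiable_apply _

lemma diff_snoc {g : (Fin (m + 1) → ℂ) → ℂ} (hg : Differentiable ℂ g) :
    Differentiable ℂ (fun z => (Fin.snoc (Fin.init z) (g z) : Fin (m + 1) → ℂ)) := by
  rw [differentiable_pi]; intro j
  refine Fin.lastCases ?_ ?_ j
  · simpa using hg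
  · intro i; simp; exact differentiable_apply (Fin.castSucc i)

/-- Membership in `good` for overshears. -/
lemma OS_mem (F : C((Fin (m + 1) → ℂ), (Fin (m + 1) → ℂ))) (f h : (Fin m → ℂ) → ℂ)
    (hf : Differentiable ℂ f) (hh : Differentiable ℂ h) (hne : ∀ w, h w ≠ 0)
    (hF : ∀ z, F z = Fin.snoc (Fin.init z)
      (f (Fin.init z) + h (Fin.init z) * z (Fin.last m))) : F ∈ good m := by
  have hcoe : ⇑F = fun z => (Fin.snoc (Fin.init z)
      (f (Fin.init z) + h (Fin.init z) * z (Fin.last m)) : Fin (m + 1) → ℂ) := funext hF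
  constructor
  · rw [hcoe]
    exact diff_snoc (((hf.comp diff_init).add ((hh.comp diff_init).mul
      (differentiable_apply _))))
  · refine ⟨fun z => Fin.snoc (Fin.init z)
      ((z (Fin.last m) - f (Fin.init z)) / h (Fin.init z)), ?_, ?_, ?_⟩
    · have h1 : Differentiable ℂ (fun z : Fin (m + 1) → ℂ => h (Fin.init z)) :=
        hh.comp diff_init
      have f1 : Differentiable ℂ (fun z : Fin (m + 1) → ℂ => f (Fin.init z)) :=
        hf.comp diff_init
      have s1 : Differentiable ℂ (fun z : Fin (m + 1) → ℂ =>
          z (Fin.last m) - f (Fin.init z)) := (differentiable_apply _).sub f1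
      have d1 : Differentiable ℂ (fun z : Fin (m + 1) → ℂ =>
          (z (Fin.last m) - f (Fin.init z)) / h (Fin.init z)) :=
        by simp only [div_eq_mul_inv]; exact s1.mul (h1.inv fun z => hne _)
      exact diff_snoc d1
    · intro z
      rw [hF]
      funext j
      refine Fin.lastCases ?_ ?_ j
      · simp only [Fin.init_snoc, Fin.snoc_last, add_sub_cancel_left]
        exact mul_div_cancel_left₀ _ (hne _)
      · intro i
        simp [Fin.init_snoc, Fin.init]
    · intro z
      conv_lhs => rw [hF]
      funext j
      refine Fin.lastCases ?_ ?_ j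
      · simp only [Fin.init_snoc, Fin.snoc_last]
        field_simp [hne (Fin.init z)]
        ring
      · intro i
        simp [Fin.init_snoc, Fin.init]


/-- Each overshear is joined to the identity within `good`. -/
lemma overshear_joinedIn (F : C((Fin (m + 1) → ℂ), (Fin (m + 1) → ℂ)))
    (f h : (Fin m → ℂ) → ℂ)
    (hf : Differentiable ℂ f) (hh : Differentiable ℂ h) (hne : ∀ w, h w ≠ 0)
    (hF : ∀ z, F z = Fin.snoc (Fin.init z)
      (f (Fin.init z) + h (Fin.init z) * z (Fin.last m))) :
    JoinedIn (good m) F (ContinuousMap.id _) := by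
  have cont_init : Continuous (Fin.init : (Fin (m + 1) → ℂ) → (Fin m → ℂ)) :=
    continuous_pi fun i => continuous_apply _
  -- the midpoint: z ↦ snoc (init z) (h 0 * z_last)
  set c : ℂ := h 0 with hc
  have hcne : c ≠ 0 := hne 0
  let D : C((Fin (m + 1) → ℂ), (Fin (m + 1) → ℂ)) :=
    ⟨fun z => Fin.snoc (Fin.init z) (c * z (Fin.last m)),
      cont_snoc cont_init (continuous_const.mul (continuous_apply _))⟩
  -- Stage A : from F to D
  have stageA : JoinedIn (good m) F D := by
    let Φ : C(unitInterval × (Fin (m + 1) → ℂ), (Fin (m + 1) → ℂ)) :=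
      ⟨fun p => Fin.snoc (Fin.init p.2)
        (((1 : ℂ) - ((p.1 : ℝ) : ℂ)) * f (Fin.init p.2) +
          h ((((1 : ℂ) - ((p.1 : ℝ) : ℂ))) • Fin.init p.2) * p.2 (Fin.last m)),
        by
          apply cont_snoc (cont_init.comp continuous_snd)
          have ct : Continuous fun p : unitInterval × (Fin (m + 1) → ℂ) =>
              ((1 : ℂ) - ((p.1 : ℝ) : ℂ)) :=
            continuous_const.sub
              (Complex.continuous_ofReal.comp (continuous_subtype_val.comp continuous_fst))
          exact ((ct.mul ((hf.continuous).comp (cont_init.comp continuous_snd))).add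
            (((hh.continuous).comp (ct.smul (cont_init.comp continuous_snd))).mul
              ((continuous_apply _).comp continuous_snd)))⟩
    refine ⟨⟨⟨fun t => Φ.curry t, (Φ.curry).continuous⟩, ?_, ?_⟩, ?_⟩
    · ext z
      simp only [ContinuousMap.curry_apply, Φ]
      rw [hF]
      norm_num
    · ext z
      simp only [ContinuousMap.curry_apply, Φ, D]
      norm_num
      rfl
    · intro t
      apply OS_mem _ (fun w => ((1 : ℂ) - ((t : ℝ) : ℂ)) * f w)
        (fun w => h (((1 : ℂ) - ((t : ℝ) : ℂ)) • w))
      · exact (differentiable_const _).mul hf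
      · exact hh.comp (differentiable_id.const_smul ((1 : ℂ) - ((t : ℝ) : ℂ)))
      · intro w; exact hne _
      · intro z; rfl
  -- Stage B : from D to id
  have stageB : JoinedIn (good m) D (ContinuousMap.id _) := by
    let Φ : C(unitInterval × (Fin (m + 1) → ℂ), (Fin (m + 1) → ℂ)) :=
      ⟨fun p => Fin.snoc (Fin.init p.2)
        (Complex.exp (((1 : ℂ) - ((p.1 : ℝ) : ℂ)) * Complex.log c) * p.2 (Fin.last m)),
        by
          apply cont_snoc (cont_init.comp continuous_snd)
          have ct : Continuous fun p : unitInterval × (Fin (m + 1) → ℂ) =>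
              ((1 : ℂ) - ((p.1 : ℝ) : ℂ)) :=
            continuous_const.sub
              (Complex.continuous_ofReal.comp (continuous_subtype_val.comp continuous_fst))
          exact (Complex.continuous_exp.comp (ct.mul continuous_const)).mul
            ((continuous_apply _).comp continuous_snd)⟩
    refine ⟨⟨⟨fun t => Φ.curry t, (Φ.curry).continuous⟩, ?_, ?_⟩, ?_⟩
    · ext z
      simp only [ContinuousMap.curry_apply, Φ, D]
      norm_num [Complex.exp_log hcne]
    · ext z
      simp only [ContinuousMap.curry_apply, Φ]
      norm_num [Fin.snoc_init_self]
    · intro t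
      apply OS_mem _ (fun _ => 0)
        (fun _ => Complex.exp (((1 : ℂ) - ((t : ℝ) : ℂ)) * Complex.log c))
      · exact differentiable_const _
      · exact differentiable_const _
      · intro w; exact Complex.exp_ne_zero _
      · intro z
        simp only [ContinuousMap.curry_apply, Φ]
        norm_num
  exact stageA.trans stageB


/-- The basic linear map mixing coordinates `a` and `b`. -/
def Lmap (a b : Fin (m + 1)) (C S : ℂ) : (Fin (m + 1) → ℂ) → (Fin (m + 1) → ℂ) :=
  fun z j => if j = a then C * z a + S * z b else if j = b then S * z a + C * z b else z j

lemma Lmap_leftInv (a b : Fin (m + 1)) {C S C' S' : ℂ}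
    (h1 : C' * C + S' * S = 1) (h2 : C' * S + S' * C = 0) :
    Function.LeftInverse (Lmap a b C' S') (Lmap a b C S) := by
  intro z
  funext j
  by_cases hab : a = b
  · subst hab
    by_cases hj : j = a
    · subst hj
      simp only [Lmap, eq_self_iff_true, if_true]
      linear_combination z j * h1 + z j * h2
    · simp only [Lmap, if_neg hj]
  · by_cases hj : j = a
    · subst hj
      simp only [Lmap, eq_self_iff_true, if_true, if_neg (Ne.symm hab), if_neg hab]
      linear_combination z j * h1 + z b * h2
    · by_cases hj' : j = b
      · subst hj'
        simp only [Lmap, eq_self_iff_true, if_true, if_neg hj, if_neg (Ne.symm hab),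
          if_neg hab]
        linear_combination z j * h1 + z a * h2
      · simp only [Lmap, if_neg hj, if_neg hj']

lemma Lmap_diff (a b : Fin (m + 1)) (C S : ℂ) : Differentiable ℂ (Lmap a b C S) := by
  rw [differentiable_pi]
  intro j
  by_cases hj : j = a
  · simp only [Lmap, if_pos hj]
    exact ((differentiable_const _).mul (differentiable_apply _)).add
      ((differentiable_const _).mul (differentiable_apply _))
  · by_cases hj' : j = b
    · simp only [Lmap, if_neg hj, if_pos hj']
      exact ((differentiable_const _).mul (differentiable_apply _)).add
        ((differentiable_const _).mul (differentiable_apply _))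
    · simp only [Lmap, if_neg hj, if_neg hj']
      exact differentiable_apply _

lemma Lmap_mem (a b : Fin (m + 1)) {C S C' S' : ℂ}
    (h1 : C' * C + S' * S = 1) (h2 : C' * S + S' * C = 0)
    (F : C((Fin (m + 1) → ℂ), (Fin (m + 1) → ℂ))) (hFc : ⇑F = Lmap a b C S) :
    F ∈ good m := by
  have h1' : C * C' + S * S' = 1 := by linear_combination h1
  have h2' : C * S' + S * C' = 0 := by linear_combination h2
  refine ⟨by rw [hFc]; exact Lmap_diff a b C S, Lmap a b C' S', Lmap_diff a b C' S', ?_, ?_⟩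
  · rw [hFc]; exact Lmap_leftInv a b h1 h2
  · rw [hFc]; exact Lmap_leftInv a b h1' h2'

/-- A coordinate swap is joined to the identity within `good`. -/
lemma swap_joinedIn (a b : Fin (m + 1)) (F : C((Fin (m + 1) → ℂ), (Fin (m + 1) → ℂ)))
    (hF : ⇑F = fun z j => z (Equiv.swap a b j)) :
    JoinedIn (good m) F (ContinuousMap.id _) := by
  set α : ℝ → ℝ := fun t => (1 - t) * (Real.pi / 2) with hα
  set cc : ℝ → ℂ := fun t => Complex.exp (-(α t : ℂ) * Complex.I) * (Real.cos (α t) : ℂ)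
    with hcc
  set ss : ℝ → ℂ := fun t =>
    Complex.I * Complex.exp (-(α t : ℂ) * Complex.I) * (Real.sin (α t) : ℂ) with hss
  set cc' : ℝ → ℂ := fun t => Complex.exp ((α t : ℂ) * Complex.I) * (Real.cos (α t) : ℂ)
    with hcc'
  set ss' : ℝ → ℂ := fun t =>
    -Complex.I * Complex.exp ((α t : ℂ) * Complex.I) * (Real.sin (α t) : ℂ) with hss'
  have he : ∀ t, Complex.exp ((α t : ℂ) * Complex.I) *
      Complex.exp (-(α t : ℂ) * Complex.I) = 1 := by
    intro t
    rw [← Complex.exp_add]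
    ring_nf
    exact Complex.exp_zero
  have hcs : ∀ t, ((Real.cos (α t) : ℂ)) ^ 2 + ((Real.sin (α t) : ℂ)) ^ 2 = 1 := by
    intro t
    norm_cast
    exact Real.cos_sq_add_sin_sq _
  have h1 : ∀ t, cc' t * cc t + ss' t * ss t = 1 := by
    intro t
    simp only [hcc, hcc', hss, hss']
    linear_combination (Complex.exp ((α t : ℂ) * Complex.I) *
        Complex.exp (-(α t : ℂ) * Complex.I)) * hcs t + he t -
      (Complex.exp ((α t : ℂ) * Complex.I) * Complex.exp (-(α t : ℂ) * Complex.I) *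
        ((Real.sin (α t) : ℂ)) ^ 2) * Complex.I_sq
  have h2 : ∀ t, cc' t * ss t + ss' t * cc t = 0 := by
    intro t
    simp only [hcc, hcc', hss, hss']
    ring
  -- exp(-(π/2) I) = -I
  have hexp0 : Complex.exp (-((Real.pi / 2 : ℝ) : ℂ) * Complex.I) = -Complex.I := by
    rw [show (-((Real.pi / 2 : ℝ) : ℂ) * Complex.I) = ((-(Real.pi / 2) : ℝ) : ℂ) * Complex.I
      by push_cast; ring, Complex.exp_mul_I, ← Complex.ofReal_cos, ← Complex.ofReal_sin]
    simp [Real.cos_pi_div_two, Real.sin_pi_div_two]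
  have hα0 : α 0 = Real.pi / 2 := by simp [hα]
  have hα1 : α 1 = 0 := by simp [hα]
  have hc0 : cc 0 = 0 := by simp [hcc, hα0, Real.cos_pi_div_two]
  have hs0 : ss 0 = 1 := by
    simp only [hss, hα0, hexp0, Real.sin_pi_div_two]
    simp [Complex.I_mul_I]
  have hc1 : cc 1 = 1 := by simp [hcc, hα1]
  have hs1 : ss 1 = 0 := by simp [hss, hα1]
  let Φ : C(unitInterval × (Fin (m + 1) → ℂ), (Fin (m + 1) → ℂ)) :=
    ⟨fun p => Lmap a b (cc p.1) (ss p.1) p.2, by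
      apply continuous_pi
      intro j
      have hccR : Continuous cc := by rw [hcc]; fun_prop
      have hssR : Continuous ss := by rw [hss]; fun_prop
      have hcont_cc : Continuous fun p : unitInterval × (Fin (m + 1) → ℂ) => cc p.1 :=
        hccR.comp (continuous_subtype_val.comp continuous_fst)
      have hcont_ss : Continuous fun p : unitInterval × (Fin (m + 1) → ℂ) => ss p.1 :=
        hssR.comp (continuous_subtype_val.comp continuous_fst)
      by_cases hj : j = a
      · simp only [Lmap, if_pos hj]
        exact (hcont_cc.mul ((continuous_apply _).comp continuous_snd)).add
          (hcont_ss.mul ((continuous_apply _).comp continuous_snd))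
      · by_cases hj' : j = b
        · simp only [Lmap, if_neg hj, if_pos hj']
          exact (hcont_ss.mul ((continuous_apply _).comp continuous_snd)).add
            (hcont_cc.mul ((continuous_apply _).comp continuous_snd))
        · simp only [Lmap, if_neg hj, if_neg hj']
          exact (continuous_apply _).comp continuous_snd⟩
  refine ⟨⟨⟨fun t => Φ.curry t, (Φ.curry).continuous⟩, ?_, ?_⟩, ?_⟩
  · refine ContinuousMap.ext fun z => ?_
    show Lmap a b (cc ((0 : unitInterval) : ℝ)) (ss ((0 : unitInterval) : ℝ)) z = F z
    rw [show ((0 : unitInterval) : ℝ) = 0 from rfl, hc0, hs0, hF]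
    funext j
    simp only [Lmap, Equiv.swap_apply_def]
    split_ifs <;> ring
  · refine ContinuousMap.ext fun z => ?_
    show Lmap a b (cc ((1 : unitInterval) : ℝ)) (ss ((1 : unitInterval) : ℝ)) z =
      ContinuousMap.id _ z
    rw [show ((1 : unitInterval) : ℝ) = 1 from rfl, hc1, hs1]
    funext j
    simp only [Lmap, ContinuousMap.id_apply]
    split_ifs with hja hjb
    · subst hja; ring
    · subst hjb; ring
    · rfl
  · intro t
    exact Lmap_mem a b (h1 t) (h2 t) _ rfl

/-- Every coordinate permutation is joined to the identity within `good`. -/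
lemma perm_joinedIn (σ : Equiv.Perm (Fin (m + 1))) :
    ∃ F : C((Fin (m + 1) → ℂ), (Fin (m + 1) → ℂ)),
      (⇑F = fun z j => z (σ j)) ∧ JoinedIn (good m) F (ContinuousMap.id _) := by
  refine Equiv.Perm.swap_induction_on σ ?_ ?_
  · exact ⟨ContinuousMap.id _, rfl, JoinedIn.refl id_mem⟩
  · rintro p x y hxy ⟨Fp, hFp, hJp⟩
    have contsw : Continuous (fun z : Fin (m + 1) → ℂ => fun j => z (Equiv.swap x y j)) :=
      continuous_pi fun j => continuous_apply _
    let Fsw : C((Fin (m + 1) → ℂ), (Fin (m + 1) → ℂ)) := ⟨_, contsw⟩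
    refine ⟨Fp.comp Fsw, ?_, joined_comp hJp (swap_joinedIn x y Fsw rfl)⟩
    funext z j
    simp only [ContinuousMap.comp_apply, hFp, Fsw, ContinuousMap.coe_mk,
      Equiv.Perm.mul_apply]


lemma single_joinedIn (F : (Fin (m + 1) → ℂ) → (Fin (m + 1) → ℂ))
    (hF : IsOvershear F ∨ IsCoordPermutation F) :
    ∃ Fc : C((Fin (m + 1) → ℂ), (Fin (m + 1) → ℂ)),
      ⇑Fc = F ∧ JoinedIn (good m) Fc (ContinuousMap.id _) := by
  rcases hF with ⟨f, h, hf, hh, hne, hFz⟩ | ⟨σ, hFz⟩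
  · have hcoe : F = fun z => (Fin.snoc (Fin.init z)
        (f (Fin.init z) + h (Fin.init z) * z (Fin.last m)) : Fin (m + 1) → ℂ) := funext hFz
    have contF : Continuous F := by
      rw [hcoe]
      exact cont_snoc (continuous_pi fun i => continuous_apply _)
        ((hf.continuous.comp (continuous_pi fun i => continuous_apply _)).add
          ((hh.continuous.comp (continuous_pi fun i => continuous_apply _)).mul
            (continuous_apply _)))
    exact ⟨⟨F, contF⟩, rfl, overshear_joinedIn ⟨F, contF⟩ f h hf hh hne hFz⟩
  · obtain ⟨Fc, hFc, hJ⟩ := perm_joinedIn σ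
    exact ⟨Fc, by rw [hFc]; exact (funext hFz).symm, hJ⟩

lemma list_joinedIn (L : List ((Fin (m + 1) → ℂ) → (Fin (m + 1) → ℂ)))
    (hL : ∀ F ∈ L, IsOvershear F ∨ IsCoordPermutation F) :
    ∃ Fc : C((Fin (m + 1) → ℂ), (Fin (m + 1) → ℂ)),
      ⇑Fc = L.foldr (· ∘ ·) id ∧ JoinedIn (good m) Fc (ContinuousMap.id _) := by
  induction L with
  | nil => exact ⟨ContinuousMap.id _, rfl, JoinedIn.refl id_mem⟩
  | cons F L ih =>
    obtain ⟨Rc, hRc, hJR⟩ := ih (fun G hG => hL G (List.mem_cons_of_mem _ hG))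
    obtain ⟨Fc, hFc, hJF⟩ := single_joinedIn F (hL F List.mem_cons_self)
    refine ⟨Fc.comp Rc, ?_, joined_comp hJF hJR⟩
    funext z
    simp [hFc, hRc]

end OSproof

/-- For `n = m + 1 ≥ 2`, every finite composition of overshears and
coordinate permutations of `ℂⁿ` can be joined to the identity by a continuous path
`γ : [0,1] → C(ℂⁿ, ℂⁿ)` (compact-open topology) all of whose values are
biholomorphic automorphisms of `ℂⁿ`. -/
theorem composition_of_overshears_and_permutations_joined_to_identity
    (m : ℕ) (hm : 1 ≤ m)
    (L : List ((Fin (m + 1) → ℂ) → (Fin (m + 1) → ℂ)))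
    (hL : ∀ F ∈ L, IsOvershear F ∨ IsCoordPermutation F) :
    ∃ γ : C(Set.Icc (0 : ℝ) 1, C((Fin (m + 1) → ℂ), (Fin (m + 1) → ℂ))),
      (∀ t : Set.Icc (0 : ℝ) 1,
        Differentiable ℂ (γ t) ∧
        ∃ G : (Fin (m + 1) → ℂ) → (Fin (m + 1) → ℂ),
          Differentiable ℂ G ∧ Function.LeftInverse G (γ t) ∧
          Function.RightInverse G (γ t)) ∧
      (∀ z : Fin (m + 1) → ℂ,
        γ ⟨0, by norm_num⟩ z = L.foldr (· ∘ ·) id z) ∧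
      (∀ z : Fin (m + 1) → ℂ, γ ⟨1, by norm_num⟩ z = z) := by
  obtain ⟨Fc, hFc, p, hp⟩ := OSproof.list_joinedIn L hL
  refine ⟨p.toContinuousMap, fun t => hp t, fun z => ?_, fun z => ?_⟩
  · have h0 : p.toContinuousMap ⟨0, by norm_num⟩ = Fc := p.source
    rw [h0, hFc]
  · have h1 : p.toContinuousMap ⟨1, by norm_num⟩ = ContinuousMap.id _ := p.target
    rw [h1]
    rfl
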